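/- Let M be a {0,1}-matrix with k ≥ 2 diagonal zeros and ℓ diagonal ones, and D a minimal M-obstruction. If D contains a homogeneous strong clique of size exactly k+1, then |V(D)| ≤ (k+1)(ℓ+1). -/

import Mathlib

variable {V : Type*}

/-- `w` distinguishes distinct vertices `u` and `v`: exactly one of `u,v` is an
in-neighbour of `w`, or exactly one of `u,v` is an out-neighbour of `w`. -/
def Distinguishes (A : V → V → Prop) (w u v : V) : Prop :=
  w ≠ u ∧ w ≠ v ∧
    ((A u w ∧ ¬ A v w) ∨ (A v w ∧ ¬ A u w) ∨ (A w u ∧ ¬ A w v) ∨ (A w v ∧ ¬ A w u))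

/-- `u,v` are false twins in the induced subdigraph on `U`. -/
def FalseTwinsOn (A : V → V → Prop) (U : Set V) (u v : V) : Prop :=
  u ∈ U ∧ v ∈ U ∧ u ≠ v ∧ ¬ A u v ∧ ¬ A v u ∧ ∀ w ∈ U, ¬ Distinguishes A w u v

/-- `u,v` are true twins in the induced subdigraph on `U`. -/
def TrueTwinsOn (A : V → V → Prop) (U : Set V) (u v : V) : Prop :=
  u ∈ U ∧ v ∈ U ∧ u ≠ v ∧ A u v ∧ A v u ∧ ∀ w ∈ U, ¬ Distinguishes A w u v

/-- The induced subdigraph on `U` is point-determining: no pair of false twins. -/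
def PointDeterminingOn (A : V → V → Prop) (U : Set V) : Prop :=
  ∀ u v, ¬ FalseTwinsOn A U u v

/-- A triple `(x, {y,z})`: `x,y,z` are pairwise distinct and `y,z` are false
twins in `D - x`. `x` is the red vertex, `y,z` are the green vertices. -/
def IsTriple (A : V → V → Prop) (x y z : V) : Prop :=
  x ≠ y ∧ x ≠ z ∧ y ≠ z ∧ FalseTwinsOn A {x}ᶜ y z

/-- `S` is a homogeneous set: any two of its vertices are twins. -/
def Homogeneous (A : V → V → Prop) (S : Set V) : Prop :=
  ∀ u ∈ S, ∀ v ∈ S, u ≠ v → ∀ w, ¬ Distinguishes A w u v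

/-- `S` is a strong clique: arcs in both directions between any two distinct members. -/
def StrongClique (A : V → V → Prop) (S : Set V) : Prop :=
  ∀ u ∈ S, ∀ v ∈ S, u ≠ v → A u v ∧ A v u

/-- `S` is an independent set: no arcs between any two distinct members. -/
def IndepSet (A : V → V → Prop) (S : Set V) : Prop :=
  ∀ u ∈ S, ∀ v ∈ S, u ≠ v → ¬ A u v

/-- `P` is an `M`-partition of the induced subdigraph on `U`: the parts `P i`
partition `U`, a part with `M i i = 0` is independent, a part with `M i i = 1`
is a strong clique, and for `i ≠ j` all arcs from `P i` to `P j` are present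
iff `M i j = 1`. -/
def IsMPartitionOn (A : V → V → Prop) {n : ℕ} (M : Fin n → Fin n → Bool)
    (U : Set V) (P : Fin n → Set V) : Prop :=
  (∀ i, P i ⊆ U) ∧ (∀ v ∈ U, ∃! i, v ∈ P i) ∧
    ∀ i j, ∀ u ∈ P i, ∀ v ∈ P j, u ≠ v → (A u v ↔ M i j = true)

def HasMPartitionOn (A : V → V → Prop) {n : ℕ} (M : Fin n → Fin n → Bool)
    (U : Set V) : Prop :=
  ∃ P, IsMPartitionOn A M U P

/-- `D` is a minimal `M`-obstruction: it admits no `M`-partition, but every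
one-vertex-deleted induced subdigraph does. -/
def MinimalObstruction (A : V → V → Prop) {n : ℕ} (M : Fin n → Fin n → Bool) : Prop :=
  ¬ HasMPartitionOn A M Set.univ ∧ ∀ v : V, HasMPartitionOn A M {v}ᶜ
lemma not_dist {A : V → V → Prop} {w u v : V} (h : ¬ Distinguishes A w u v)
    (hwu : w ≠ u) (hwv : w ≠ v) : (A u w ↔ A v w) ∧ (A w u ↔ A w v) := by
  unfold Distinguishes at h
  tauto

lemma addback {n : ℕ} {A : V → V → Prop} {M : Fin n → Fin n → Bool} {x y : V} {m : Fin n}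
    {Q : Fin n → Set V} (hQ : IsMPartitionOn A M {x}ᶜ Q) (hy : y ∈ Q m)
    (hxy : x ≠ y) (htw : ∀ w, ¬ Distinguishes A w x y)
    (haxy : A x y) (hayx : A y x) (hmm : M m m = true) :
    HasMPartitionOn A M Set.univ := by
  classical
  obtain ⟨hsub, hex, hadj⟩ := hQ
  have hne : ∀ {i v}, v ∈ Q i → v ≠ x := fun {i v} hv => by
    have := hsub i hv; simpa using this
  have puniq : ∀ w, w ≠ x → ∀ i j, w ∈ Q i → w ∈ Q j → i = j := by
    intro w hw i j h1 h2
    obtain ⟨c, _, hu⟩ := hex w (by simpa using hw)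
    rw [hu i h1, hu j h2]
  refine ⟨fun i => if i = m then insert x (Q i) else Q i, fun i => Set.subset_univ _, ?_, ?_⟩
  · intro v _
    by_cases hvx : v = x
    · refine ⟨m, by simp [hvx], ?_⟩
      intro j hj
      by_cases hjm : j = m
      · exact hjm
      · simp only [if_neg hjm] at hj
        exact absurd (hvx ▸ hne hj) (by simp)
    · obtain ⟨i, hi, huniq⟩ := hex v (by simpa using hvx)
      refine ⟨i, ?_, ?_⟩
      · by_cases him : i = m
        · simp only [if_pos him]
          exact Set.mem_insert_of_mem _ hi
        · simpa [if_neg him] using hi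
      · intro j hj
        by_cases hjm : j = m
        · simp only [if_pos hjm, Set.mem_insert_iff] at hj
          rcases hj with h1 | h2
          · exact absurd h1 hvx
          · exact huniq _ h2
        · simp only [if_neg hjm] at hj
          exact huniq _ hj
  · intro i j u hu v hv huv
    have hu' : u ∈ Q i ∨ (i = m ∧ u = x) := by
      by_cases him : i = m
      · simp only [if_pos him, Set.mem_insert_iff] at hu; tauto
      · simp only [if_neg him] at hu; tauto
    have hv' : v ∈ Q j ∨ (j = m ∧ v = x) := by
      by_cases hjm : j = m
      · simp only [if_pos hjm, Set.mem_insert_iff] at hv; tauto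
      · simp only [if_neg hjm] at hv; tauto
    rcases hu' with hu1 | ⟨him, hux⟩
    · rcases hv' with hv1 | ⟨hjm, hvx⟩
      · exact hadj i j u hu1 v hv1 huv
      · rw [hvx, hjm]
        by_cases huy : u = y
        · have hieq : i = m := puniq u (hne hu1) i m hu1 (huy ▸ hy)
          rw [huy, hieq]
          simp [hayx, hmm]
        · have hiff := (not_dist (htw u) (hne hu1) huy).2
          rw [show A u x ↔ A u y from hiff]
          exact hadj i m u hu1 y hy huy
    · rcases hv' with hv1 | ⟨hjm, hvx⟩
      · rw [hux, him]
        by_cases hvy : v = y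
        · have hjeq : j = m := puniq v (hne hv1) j m hv1 (hvy ▸ hy)
          rw [hvy, hjeq]
          simp [haxy, hmm]
        · have hiff := (not_dist (htw v) (hne hv1) hvy).1
          rw [show A x v ↔ A y v from hiff]
          exact hadj m j y hy v hv1 (Ne.symm hvy)
      · exact absurd (hux.trans hvx.symm) huv

lemma card_diag_false {k l : ℕ} (M : Fin (k + l) → Fin (k + l) → Bool)
    (hdiag : ∀ i : Fin (k + l), M i i = true ↔ k ≤ (i : ℕ)) :
    Fintype.card {i : Fin (k + l) // M i i = false} = k := by
  have key : ∀ i : Fin (k + l), M i i = false ↔ (i : ℕ) < k := by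
    intro i
    rw [show (M i i = false) ↔ ¬ (M i i = true) from by cases M i i <;> simp, hdiag i]
    omega
  have e : {i : Fin (k + l) // M i i = false} ≃ Fin k :=
    { toFun := fun x => ⟨(x.1 : ℕ), (key x.1).mp x.2⟩
      invFun := fun y => ⟨⟨(y : ℕ), by omega⟩, (key _).mpr y.2⟩
      left_inv := fun x => rfl
      right_inv := fun y => rfl }
  rw [Fintype.card_congr e, Fintype.card_fin]

lemma clique_small [Fintype V] {k l : ℕ} {A : V → V → Prop}
    {M : Fin (k + l) → Fin (k + l) → Bool}
    (hdiag : ∀ i : Fin (k + l), M i i = true ↔ k ≤ (i : ℕ))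
    (hobs : MinimalObstruction A M)
    {T : Set V} (hhomT : Homogeneous A T) (hscT : StrongClique A T) :
    T.ncard ≤ k + 1 := by
  classical
  by_contra hbig
  push_neg at hbig
  have hTfin : T.Finite := T.toFinite
  have hTne : T.Nonempty := Set.nonempty_of_ncard_ne_zero (by omega)
  obtain ⟨t, ht⟩ := hTne
  obtain ⟨Q, hQ⟩ := hobs.2 t
  obtain ⟨hsub, hex, hadj⟩ := hQ
  have hex' : ∀ v, v ≠ t → ∃ i, v ∈ Q i ∧ ∀ j, v ∈ Q j → j = i := fun v hv =>
    hex v (by simpa using hv)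
  choose idx hmem huniq using hex'
  by_cases hcase : ∃ y, ∃ _ : y ∈ T, ∃ hyt : y ≠ t, M (idx y hyt) (idx y hyt) = true
  · obtain ⟨y, hyT, hyt, hMy⟩ := hcase
    exact hobs.1 (addback ⟨hsub, hex, hadj⟩ (hmem y hyt) (Ne.symm hyt)
      (hhomT t ht y hyT (Ne.symm hyt)) ((hscT t ht y hyT (Ne.symm hyt)).1)
      ((hscT t ht y hyT (Ne.symm hyt)).2) hMy)
  · push_neg at hcase
    haveI : Fintype ↥(T \ {t}) := (hTfin.diff : (T \ {t}).Finite).fintype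
    have hyt' : ∀ y : ↥(T \ {t}), y.1 ≠ t := fun y => by
      have := y.2.2; simpa using this
    have hfalse : ∀ y : ↥(T \ {t}), M (idx y.1 (hyt' y)) (idx y.1 (hyt' y)) = false := by
      intro y
      have hy := hcase y.1 y.2.1 (hyt' y)
      cases h : M (idx y.1 (hyt' y)) (idx y.1 (hyt' y))
      · rfl
      · exact absurd h hy
    have hGinj : Function.Injective
        (fun y : ↥(T \ {t}) =>
          (⟨idx y.1 (hyt' y), hfalse y⟩ : {i : Fin (k + l) // M i i = false})) := by
      intro a b hab
      have hval : idx a.1 (hyt' a) = idx b.1 (hyt' b) := congrArg Subtype.val hab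
      by_contra hne
      have hne' : a.1 ≠ b.1 := fun h => hne (Subtype.ext h)
      have h1 : a.1 ∈ Q (idx a.1 (hyt' a)) := hmem a.1 (hyt' a)
      have h2 : b.1 ∈ Q (idx a.1 (hyt' a)) := by rw [hval]; exact hmem b.1 (hyt' b)
      have hA : A a.1 b.1 := (hscT a.1 a.2.1 b.1 b.2.1 hne').1
      have hM := (hadj _ _ a.1 h1 b.1 h2 hne').mp hA
      have hf := hfalse a
      rw [hf] at hM
      cases hM
    have hcard1 : Fintype.card ↥(T \ {t}) ≤ k := by
      have := Fintype.card_le_of_injective _ hGinj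
      rwa [card_diag_false M hdiag] at this
    have hcard2 : (T \ {t}).ncard = T.ncard - 1 := Set.ncard_diff_singleton_of_mem ht
    have hcard3 : (T \ {t}).ncard = Fintype.card ↥(T \ {t}) := by
      rw [← Nat.card_coe_set_eq, Nat.card_eq_fintype_card]
    omega

theorem stmt12 [Fintype V] {k l : ℕ} (A : V → V → Prop) (hirr : ∀ v, ¬ A v v)
    (M : Fin (k + l) → Fin (k + l) → Bool)
    (hdiag : ∀ i : Fin (k + l), M i i = true ↔ k ≤ (i : ℕ))
    (hk : 2 ≤ k) (hobs : MinimalObstruction A M)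
    (S : Set V) (hhom : Homogeneous A S) (hsc : StrongClique A S)
    (hcard : S.ncard = k + 1) :
    Fintype.card V ≤ (k + 1) * (l + 1) := by
  classical
  have hSfin : S.Finite := S.toFinite
  have hSne : S.Nonempty := Set.nonempty_of_ncard_ne_zero (by omega)
  obtain ⟨s, hs⟩ := hSne
  obtain ⟨Q, hQ⟩ := hobs.2 s
  obtain ⟨hsub, hex, hadj⟩ := hQ
  have hex' : ∀ v, v ≠ s → ∃ i, v ∈ Q i ∧ ∀ j, v ∈ Q j → j = i := fun v hv =>
    hex v (by simpa using hv)
  choose idx hmem huniq using hex'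
  have hQne : ∀ {i v}, v ∈ Q i → v ≠ s := fun {i v} hv => by
    have := hsub i hv; simpa using this
  have hpart : ∀ {v i} (hv : v ∈ Q i), idx v (hQne hv) = i :=
    fun {v i} hv => (huniq v (hQne hv) i hv).symm
  -- Lemma 1 : every vertex of S \ {s} lies in a 0-diagonal part
  have lem1 : ∀ v (hvS : v ∈ S) (hvs : v ≠ s), M (idx v hvs) (idx v hvs) = false := by
    intro v hvS hvs
    cases hMv : M (idx v hvs) (idx v hvs)
    · rfl
    · exact absurd (addback ⟨hsub, hex, hadj⟩ (hmem v hvs) (Ne.symm hvs)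
        (hhom s hs v hvS (Ne.symm hvs)) ((hsc s hs v hvS (Ne.symm hvs)).1)
        ((hsc s hs v hvS (Ne.symm hvs)).2) hMv) hobs.1
  haveI : Fintype ↥(S \ {s}) := (hSfin.diff : (S \ {s}).Finite).fintype
  have hmem' : ∀ x : ↥(S \ {s}), x.1 ≠ s := fun x => by
    have := x.2.2; simpa using this
  set F : ↥(S \ {s}) → {i : Fin (k + l) // M i i = false} :=
    fun x => ⟨idx x.1 (hmem' x), lem1 x.1 x.2.1 (hmem' x)⟩ with hF
  have hFinj : Function.Injective F := by
    intro a b hab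
    have hval : idx a.1 (hmem' a) = idx b.1 (hmem' b) := congrArg Subtype.val hab
    by_contra hne
    have hne' : a.1 ≠ b.1 := fun h => hne (Subtype.ext h)
    have h1 : a.1 ∈ Q (idx a.1 (hmem' a)) := hmem a.1 (hmem' a)
    have h2 : b.1 ∈ Q (idx a.1 (hmem' a)) := by rw [hval]; exact hmem b.1 (hmem' b)
    have hA : A a.1 b.1 := (hsc a.1 a.2.1 b.1 b.2.1 hne').1
    have hM := (hadj _ _ a.1 h1 b.1 h2 hne').mp hA
    have hf := lem1 a.1 a.2.1 (hmem' a)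
    rw [hf] at hM
    cases hM
  have hαcard : Fintype.card ↥(S \ {s}) = k := by
    have h1 : (S \ {s}).ncard = k := by
      rw [Set.ncard_diff_singleton_of_mem hs, hcard]
      omega
    rw [← Nat.card_coe_set_eq, Nat.card_eq_fintype_card] at h1
    exact h1
  have hβcard : Fintype.card {i : Fin (k + l) // M i i = false} = k :=
    card_diag_false M hdiag
  have hFbij : Function.Bijective F :=
    (Fintype.bijective_iff_injective_and_card F).mpr ⟨hFinj, by rw [hαcard, hβcard]⟩
  -- fiber bounds
  have fiber0 : ∀ i : Fin (k + l), M i i = false → (Q i).ncard ≤ 1 := by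
    intro i hMi
    obtain ⟨x, hx⟩ := hFbij.2 ⟨i, hMi⟩
    have hxi : idx x.1 (hmem' x) = i := congrArg Subtype.val hx
    have hxQ : x.1 ∈ Q i := hxi ▸ hmem x.1 (hmem' x)
    have hsingle : Q i ⊆ {x.1} := by
      intro u hu
      by_contra hux
      have hux' : u ≠ x.1 := by simpa using hux
      obtain ⟨j', hj'⟩ := Fintype.exists_ne_of_one_lt_card
        (by rw [hβcard]; omega) (⟨i, hMi⟩ : {i : Fin (k + l) // M i i = false})
      obtain ⟨y, hy⟩ := hFbij.2 j'
      have hyi : idx y.1 (hmem' y) = j'.1 := congrArg Subtype.val hy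
      have hyQ : y.1 ∈ Q j'.1 := hyi ▸ hmem y.1 (hmem' y)
      have hij : j'.1 ≠ i := fun h => hj' (Subtype.ext h)
      have hxy : x.1 ≠ y.1 := by
        intro h
        apply hij
        rw [← hyi]
        conv_rhs => rw [← hxi]
        congr 1
        exact h.symm
      have huy : u ≠ y.1 := by
        intro h
        apply hij
        rw [← hyi, ← hpart hu]
        congr 1
        exact h.symm
      have hMij : M i j'.1 = true := (hadj i j'.1 x.1 hxQ y.1 hyQ hxy).mp
        ((hsc x.1 x.2.1 y.1 y.2.1 hxy).1)
      have hAuy : A u y.1 := (hadj i j'.1 u hu y.1 hyQ huy).mpr hMij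
      have hAux : ¬ A u x.1 := fun hA => by
        have := (hadj i i u hu x.1 hxQ hux').mp hA
        rw [hMi] at this
        cases this
      exact hhom x.1 x.2.1 y.1 y.2.1 hxy u
        ⟨hux', huy, Or.inr (Or.inr (Or.inr ⟨hAuy, hAux⟩))⟩
    calc (Q i).ncard ≤ ({x.1} : Set V).ncard :=
          Set.ncard_le_ncard hsingle (Set.finite_singleton _)
      _ = 1 := Set.ncard_singleton _
  have fiber1 : ∀ j : Fin (k + l), M j j = true → (Q j).ncard ≤ k + 1 := by
    intro j hMj
    have hβpos : 0 < Fintype.card {i : Fin (k + l) // M i i = false} := by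
      rw [hβcard]; omega
    obtain ⟨b0⟩ := Fintype.card_pos_iff.mp hβpos
    obtain ⟨x0, hx0⟩ := hFbij.2 b0
    have hx0i : idx x0.1 (hmem' x0) = b0.1 := congrArg Subtype.val hx0
    have hx0Q : x0.1 ∈ Q b0.1 := hx0i ▸ hmem x0.1 (hmem' x0)
    have hjb : j ≠ b0.1 := by
      intro h
      have := b0.2
      rw [← h, hMj] at this
      cases this
    have hTsc : StrongClique A (Q j) := by
      intro u hu v hv huv
      exact ⟨(hadj j j u hu v hv huv).mpr hMj, (hadj j j v hv u hu (Ne.symm huv)).mpr hMj⟩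
    have hThom : Homogeneous A (Q j) := by
      intro u hu v hv huv w hd
      obtain ⟨hwu, hwv, hcases⟩ := hd
      by_cases hws : w = s
      · have hub : u ≠ x0.1 := by
          intro h
          exact hjb (by rw [← hpart hu, ← hx0i]; congr 1)
        have hvb : v ≠ x0.1 := by
          intro h
          exact hjb (by rw [← hpart hv, ← hx0i]; congr 1)
        have hu1 : A u x0.1 ↔ M j b0.1 = true := hadj j b0.1 u hu x0.1 hx0Q hub
        have hv1 : A v x0.1 ↔ M j b0.1 = true := hadj j b0.1 v hv x0.1 hx0Q hvb
        have hu2 : A x0.1 u ↔ M b0.1 j = true := hadj b0.1 j x0.1 hx0Q u hu (Ne.symm hub)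
        have hv2 : A x0.1 v ↔ M b0.1 j = true := hadj b0.1 j x0.1 hx0Q v hv (Ne.symm hvb)
        have hnd_u := not_dist (hhom s hs x0.1 x0.2.1 (Ne.symm (hmem' x0)) u)
          (hQne hu) hub
        have hnd_v := not_dist (hhom s hs x0.1 x0.2.1 (Ne.symm (hmem' x0)) v)
          (hQne hv) hvb
        -- hnd_u : (A s u ↔ A x0 u) ∧ (A u s ↔ A u x0)
        have e1 : A u s ↔ A v s := by
          rw [hnd_u.2, hnd_v.2, hu1, hv1]
        have e2 : A s u ↔ A s v := by
          rw [hnd_u.1, hnd_v.1, hu2, hv2]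
        rw [hws] at hcases
        rcases hcases with ⟨h1, h2⟩ | ⟨h1, h2⟩ | ⟨h1, h2⟩ | ⟨h1, h2⟩
        · exact h2 (e1.mp h1)
        · exact h2 (e1.mpr h1)
        · exact h2 (e2.mp h1)
        · exact h2 (e2.mpr h1)
      · have hwQ : w ∈ Q (idx w hws) := hmem w hws
        have e1 : A u w ↔ A v w := by
          rw [hadj j (idx w hws) u hu w hwQ (Ne.symm hwu),
            hadj j (idx w hws) v hv w hwQ (Ne.symm hwv)]
        have e2 : A w u ↔ A w v := by
          rw [hadj (idx w hws) j w hwQ u hu hwu, hadj (idx w hws) j w hwQ v hv hwv]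
        rcases hcases with ⟨h1, h2⟩ | ⟨h1, h2⟩ | ⟨h1, h2⟩ | ⟨h1, h2⟩
        · exact h2 (e1.mp h1)
        · exact h2 (e1.mpr h1)
        · exact h2 (e2.mp h1)
        · exact h2 (e2.mpr h1)
    exact clique_small hdiag hobs hThom hTsc
  -- counting
  set g : V → Option (Fin (k + l)) := fun v => if hv : v = s then none else some (idx v hv)
    with hg
  have hcardsum : Fintype.card V
      = ∑ b : Option (Fin (k + l)), (Finset.univ.filter fun v => g v = b).card := by
    rw [← Finset.card_univ]
    exact Finset.card_eq_sum_card_fiberwise (fun x _ => Finset.mem_univ (g x))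
  have hfib_none : (Finset.univ.filter fun v => g v = none).card ≤ 1 := by
    apply Finset.card_le_one.mpr
    intro a ha b hb
    simp only [Finset.mem_filter, Finset.mem_univ, true_and, hg] at ha hb
    have ha' : a = s := by
      by_contra h
      rw [dif_neg h] at ha
      cases ha
    have hb' : b = s := by
      by_contra h
      rw [dif_neg h] at hb
      cases hb
    rw [ha', hb']
  have hfib_some : ∀ i : Fin (k + l),
      (Finset.univ.filter fun v => g v = some i).card
        ≤ if M i i = true then k + 1 else 1 := by
    intro i
    have hle : (Finset.univ.filter fun v => g v = some i).card ≤ (Q i).ncard := by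
      rw [Set.ncard_eq_toFinset_card' (Q i)]
      apply Finset.card_le_card
      intro v hv
      simp only [Finset.mem_filter, Finset.mem_univ, true_and, hg] at hv
      by_cases hvs : v = s
      · rw [dif_pos hvs] at hv; cases hv
      · rw [dif_neg hvs] at hv
        have : idx v hvs = i := Option.some_injective _ hv
        rw [Set.mem_toFinset]
        exact this ▸ hmem v hvs
    cases hMi : M i i
    · rw [if_neg (by simp)]
      exact hle.trans (fiber0 i hMi)
    · rw [if_pos rfl]
      exact hle.trans (fiber1 i hMi)
  have hsum2 : (∑ i : Fin (k + l), if M i i = true then k + 1 else 1) = k + l * (k + 1) := by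
    have hcongr : ∀ i : Fin (k + l),
        (if M i i = true then k + 1 else 1) = (if k ≤ (i : ℕ) then k + 1 else 1) := by
      intro i
      by_cases h : M i i = true
      · rw [if_pos h, if_pos ((hdiag i).mp h)]
      · rw [if_neg h, if_neg (fun hk' => h ((hdiag i).mpr hk'))]
    rw [Finset.sum_congr rfl (fun i _ => hcongr i)]
    rw [Fin.sum_univ_eq_sum_range (fun i => if k ≤ i then k + 1 else 1) (k + l)]
    rw [Finset.range_eq_Ico, ← Finset.sum_Ico_consecutive _ (Nat.zero_le k) (Nat.le_add_right k l)]
    have hA : (∑ i ∈ Finset.Ico 0 k, if k ≤ i then k + 1 else 1) = k := by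
      rw [Finset.sum_congr rfl (fun i hi => if_neg (by
        simp only [Finset.mem_Ico] at hi; omega))]
      simp [Nat.card_Ico]
    have hB : (∑ i ∈ Finset.Ico k (k + l), if k ≤ i then k + 1 else 1) = l * (k + 1) := by
      rw [Finset.sum_congr rfl (fun i hi => if_pos (by
        simp only [Finset.mem_Ico] at hi; omega))]
      simp [Nat.card_Ico, mul_comm]
    rw [hA, hB]
  calc Fintype.card V
      = ∑ b : Option (Fin (k + l)), (Finset.univ.filter fun v => g v = b).card := hcardsum
    _ ≤ 1 + ∑ i : Fin (k + l), (if M i i = true then k + 1 else 1) := by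
        rw [Fintype.sum_option fun b => (Finset.univ.filter fun v => g v = b).card]
        exact Nat.add_le_add hfib_none (Finset.sum_le_sum fun i _ => hfib_some i)
    _ = 1 + (k + l * (k + 1)) := by rw [hsum2]
    _ = (k + 1) * (l + 1) := by ring
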